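/- Let f : ℝ^{m×n} → ℝ be differentiable with an L-Lipschitz gradient ∇f (i.e. ‖∇f(a) − ∇f(b)‖_F ≤ L‖a − b‖_F for all a, b, with L > 0), let x* ∈ ℝ^{m×n} satisfy Πx* = 0, let 0 ≤ c ≤ 1, and let x, x' ∈ ℝ^{m×n}. Set y = x' + c(x' − x) and z = y − (1/L)∇f(y). Then ‖Πz‖_F ≤ (1/L)‖∇f(x*)‖_F + 4‖x' − x*‖_F + 2‖x − x*‖_F. -/

import Mathlib

open scoped RealInnerProductSpace

/-- The column-average operator `x ↦ (1/m)·1 1ᵀ x` on `ℝ^{m×n}`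
(viewed as a Euclidean space with the Frobenius inner product). -/
noncomputable def colAvg (m n : ℕ) (x : EuclideanSpace ℝ (Fin m × Fin n)) :
    EuclideanSpace ℝ (Fin m × Fin n) :=
  WithLp.toLp 2 (fun p : Fin m × Fin n => (m : ℝ)⁻¹ * ∑ k : Fin m, x (k, p.2))

/-- The operator `Π = I − (1/m)·1 1ᵀ` acting on `ℝ^{m×n}`. -/
noncomputable def cProj (m n : ℕ) (x : EuclideanSpace ℝ (Fin m × Fin n)) :
    EuclideanSpace ℝ (Fin m × Fin n) :=
  x - colAvg m n x

lemma cProj_sub (m n : ℕ) (a b : EuclideanSpace ℝ (Fin m × Fin n)) :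
    cProj m n (a - b) = cProj m n a - cProj m n b := by
  ext p
  simp only [cProj, colAvg, PiLp.sub_apply, PiLp.toLp_apply, Pi.sub_apply, Finset.sum_sub_distrib, mul_sub]
  ring

lemma cProj_smul (m n : ℕ) (s : ℝ) (a : EuclideanSpace ℝ (Fin m × Fin n)) :
    cProj m n (s • a) = s • cProj m n a := by
  ext p
  simp only [cProj, colAvg, PiLp.sub_apply, PiLp.toLp_apply, PiLp.smul_apply, smul_eq_mul,
    ← Finset.mul_sum, Finset.mul_sum]
  ring_nf
  rw [Finset.mul_sum]
  ring_nf

lemma inner_colAvg_cProj (m n : ℕ) (x : EuclideanSpace ℝ (Fin m × Fin n)) :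
    ⟪colAvg m n x, cProj m n x⟫ = 0 := by
  rw [PiLp.inner_apply]
  simp only [RCLike.inner_apply, conj_trivial, cProj, colAvg, PiLp.sub_apply, PiLp.toLp_apply]
  rw [Fintype.sum_prod_type_right]
  apply Finset.sum_eq_zero
  intro j _
  rcases Nat.eq_zero_or_pos m with hm | hm
  · subst hm; simp
  have hm' : (m : ℝ) ≠ 0 := Nat.cast_ne_zero.mpr hm.ne'
  simp only [Prod.snd]
  rw [← Finset.sum_mul, Finset.sum_sub_distrib, Finset.sum_const, Finset.card_univ,
    Fintype.card_fin, nsmul_eq_mul]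
  field_simp
  ring

lemma norm_cProj_le (m n : ℕ) (x : EuclideanSpace ℝ (Fin m × Fin n)) :
    ‖cProj m n x‖ ≤ ‖x‖ := by
  have hx : x = colAvg m n x + cProj m n x := by simp [cProj]
  have h := norm_add_sq_real (colAvg m n x) (cProj m n x)
  rw [← hx, inner_colAvg_cProj] at h
  nlinarith [norm_nonneg (colAvg m n x), norm_nonneg (cProj m n x), norm_nonneg x]

theorem stmt18 (m n : ℕ) (hm : 0 < m) (L : ℝ) (hL : 0 < L)
    (f : EuclideanSpace ℝ (Fin m × Fin n) → ℝ)
    (gf : EuclideanSpace ℝ (Fin m × Fin n) → EuclideanSpace ℝ (Fin m × Fin n))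
    -- `gf` (the gradient of `f`) is `L`-Lipschitz
    (hlip : ∀ a b, ‖gf a - gf b‖ ≤ L * ‖a - b‖)
    (xs : EuclideanSpace ℝ (Fin m × Fin n)) (hxs : cProj m n xs = 0)
    (c : ℝ) (hc0 : 0 ≤ c) (hc1 : c ≤ 1)
    (x x' y z : EuclideanSpace ℝ (Fin m × Fin n))
    (hy : y = x' + c • (x' - x))
    (hz : z = y - L⁻¹ • gf y) :
    ‖cProj m n z‖ ≤ L⁻¹ * ‖gf xs‖ + 4 * ‖x' - xs‖ + 2 * ‖x - xs‖ := by
  have hLinv : (0:ℝ) < L⁻¹ := inv_pos.mpr hL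
  have hgy : ‖gf y‖ ≤ ‖gf xs‖ + L * ‖y - xs‖ := by
    have h1 := hlip y xs
    have h2 : ‖gf y‖ - ‖gf xs‖ ≤ ‖gf y - gf xs‖ := norm_sub_norm_le _ _
    linarith
  have hY : ‖y - xs‖ ≤ 2 * ‖x' - xs‖ + ‖x - xs‖ := by
    have he : y - xs = (x' - xs) + c • ((x' - xs) - (x - xs)) := by rw [hy]; module
    rw [he]
    have h1 := norm_add_le (x' - xs) (c • ((x' - xs) - (x - xs)))
    have h2 : ‖c • ((x' - xs) - (x - xs))‖ = c * ‖(x' - xs) - (x - xs)‖ := by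
      rw [norm_smul, Real.norm_of_nonneg hc0]
    have h3 := norm_sub_le (x' - xs) (x - xs)
    nlinarith [norm_nonneg (x' - xs), norm_nonneg (x - xs),
      norm_nonneg ((x' - xs) - (x - xs))]
  have h1 : cProj m n z = cProj m n (y - xs) - L⁻¹ • cProj m n (gf y) := by
    rw [hz, cProj_sub, cProj_smul, cProj_sub, hxs, sub_zero]
  have h4 : ‖cProj m n z‖ ≤ ‖y - xs‖ + L⁻¹ * ‖gf y‖ := by
    rw [h1]
    calc ‖cProj m n (y - xs) - L⁻¹ • cProj m n (gf y)‖
        ≤ ‖cProj m n (y - xs)‖ + ‖L⁻¹ • cProj m n (gf y)‖ := norm_sub_le _ _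
      _ ≤ ‖y - xs‖ + L⁻¹ * ‖gf y‖ := by
          rw [norm_smul, Real.norm_of_nonneg hLinv.le]
          exact add_le_add (norm_cProj_le m n _)
            (mul_le_mul_of_nonneg_left (norm_cProj_le m n _) hLinv.le)
  have hinvL : L⁻¹ * L = 1 := inv_mul_cancel₀ hL.ne'
  have h5 : L⁻¹ * ‖gf y‖ ≤ L⁻¹ * ‖gf xs‖ + ‖y - xs‖ := by
    have := mul_le_mul_of_nonneg_left hgy hLinv.le
    nlinarith [norm_nonneg (y - xs)]
  linarith
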